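/- If an n×n block-partitioned real matrix A is block diagonally stable, i.e., there exists a symmetric positive definite matrix P = blkdiag(P_1,…,P_N), with P_i of size n_i×n_i, such that Aᵀ P + P A is negative definite, then A is robustly block D-stable. -/

import Mathlib

open Matrix

/-- A square real matrix is Hurwitz if every eigenvalue of it, viewed as a complex
matrix, has strictly negative real part. -/
def IsHurwitz {m : Type*} [Fintype m] [DecidableEq m] (M : Matrix m m ℝ) : Prop :=
  ∀ μ ∈ spectrum ℂ (M.map (algebraMap ℝ ℂ)), μ.re < 0

/-- The operator 2-norm of a square real matrix. -/
noncomputable def opNorm2 {m : Type*} [Fintype m] [DecidableEq m] (M : Matrix m m ℝ) : ℝ :=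
  ‖Matrix.toEuclideanCLM (𝕜 := ℝ) M‖

/-- A block-partitioned square real matrix (blocks indexed by `ι`, the `i`-th block of
size `n i`) is block D-stable if `D * A` is Hurwitz for every positive block-diagonal
scaling `D = blkdiag (d 1 • I, …, d N • I)`. -/
def BlockDStable {ι : Type*} [Fintype ι] [DecidableEq ι] {n : ι → ℕ}
    (A : Matrix ((i : ι) × Fin (n i)) ((i : ι) × Fin (n i)) ℝ) : Prop :=
  ∀ d : ι → ℝ, (∀ i, 0 < d i) →
    IsHurwitz (Matrix.diagonal (fun p => d p.1) * A)

/-- A block-partitioned square real matrix is robustly block D-stable if all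
sufficiently small (in operator 2-norm) perturbations of it are block D-stable. -/
def RobustBlockDStable {ι : Type*} [Fintype ι] [DecidableEq ι] {n : ι → ℕ}
    (A : Matrix ((i : ι) × Fin (n i)) ((i : ι) × Fin (n i)) ℝ) : Prop :=
  ∃ μ > 0, ∀ B : Matrix ((i : ι) × Fin (n i)) ((i : ι) × Fin (n i)) ℝ,
    opNorm2 B ≤ μ → BlockDStable (A + B)

section Auxiliary

open scoped ComplexOrder

variable {m : Type*} [Fintype m] [DecidableEq m]

omit [DecidableEq m] in
lemma blkaux_map_mulVec_complex (Q : Matrix m m ℝ) (u : m → ℝ) :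
    (Q.map (algebraMap ℝ ℂ)) *ᵥ (fun i => ((u i : ℂ))) = fun i => ((((Q *ᵥ u) i : ℝ)) : ℂ) := by
  funext i
  simp [mulVec, dotProduct, Matrix.map_apply]

omit [DecidableEq m] in
lemma blkaux_dot_coe (u v : m → ℝ) :
    (fun i => ((u i : ℂ))) ⬝ᵥ (fun i => ((v i : ℂ))) = ((u ⬝ᵥ v : ℝ) : ℂ) := by
  simp [dotProduct]

omit [DecidableEq m] in
/-- A positive definite real matrix is positive definite as a complex matrix. -/
lemma blkaux_posDef_map_complex {Q : Matrix m m ℝ} (hQ : Q.PosDef) :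
    (Q.map (algebraMap ℝ ℂ)).PosDef := by
  have hsym : Qᵀ = Q := hQ.1
  rw [Matrix.posDef_iff_dotProduct_mulVec]
  constructor
  · ext i j
    simp only [conjTranspose_apply, Matrix.map_apply, Complex.coe_algebraMap, RCLike.star_def,
      Complex.conj_ofReal]
    norm_cast
    simpa using congrFun (congrFun hsym i) j
  · intro x hx
    set a : m → ℝ := fun i => (x i).re with ha
    set b : m → ℝ := fun i => (x i).im with hb
    have hx' : x = (fun i => ((a i : ℂ))) + Complex.I • (fun i => ((b i : ℂ))) := by
      funext i
      simp only [Pi.add_apply, Pi.smul_apply, smul_eq_mul]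
      apply Complex.ext <;> simp [ha, hb]
    have hstar : star x = (fun i => ((a i : ℂ))) - Complex.I • (fun i => ((b i : ℂ))) := by
      funext i
      simp only [Pi.star_apply, Pi.sub_apply, Pi.smul_apply, smul_eq_mul]
      apply Complex.ext <;> simp [ha, hb]
    have cross : a ⬝ᵥ (Q *ᵥ b) = b ⬝ᵥ (Q *ᵥ a) := by
      calc a ⬝ᵥ (Q *ᵥ b) = (a ᵥ* Q) ⬝ᵥ b := dotProduct_mulVec _ _ _
        _ = (a ᵥ* Qᵀᵀ) ⬝ᵥ b := by rw [transpose_transpose]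
        _ = (Qᵀ *ᵥ a) ⬝ᵥ b := by rw [vecMul_transpose]
        _ = (Q *ᵥ a) ⬝ᵥ b := by rw [hsym]
        _ = b ⬝ᵥ (Q *ᵥ a) := dotProduct_comm _ _
    have key : star x ⬝ᵥ ((Q.map (algebraMap ℝ ℂ)) *ᵥ x)
        = ((a ⬝ᵥ (Q *ᵥ a) + b ⬝ᵥ (Q *ᵥ b) : ℝ) : ℂ) := by
      conv_lhs => rw [hstar, hx']
      simp only [mulVec_add, mulVec_smul, blkaux_map_mulVec_complex, sub_dotProduct,
        dotProduct_add, smul_dotProduct, dotProduct_smul, blkaux_dot_coe, smul_eq_mul]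
      rw [cross]
      push_cast
      ring_nf
      simp only [Complex.I_sq]
      ring
    rw [key]
    have hab : a ≠ 0 ∨ b ≠ 0 := by
      by_contra h
      push_neg at h
      apply hx
      funext i
      have h1 := congrFun h.1 i
      have h2 := congrFun h.2 i
      simp [ha, hb] at h1 h2
      exact Complex.ext h1 h2
    have hge : ∀ u : m → ℝ, 0 ≤ u ⬝ᵥ (Q *ᵥ u) := fun u => by
      simpa using hQ.posSemidef.dotProduct_mulVec_nonneg u
    have hpos : 0 < a ⬝ᵥ (Q *ᵥ a) + b ⬝ᵥ (Q *ᵥ b) := by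
      rcases hab with h | h
      · have := hQ.dotProduct_mulVec_pos h
        simp only [star_trivial] at this
        linarith [hge b]
      · have := hQ.dotProduct_mulVec_pos h
        simp only [star_trivial] at this
        linarith [hge a]
    exact_mod_cast Complex.zero_lt_real.mpr hpos

/-- Lyapunov's theorem: if `Q` is positive definite and `-(Mᵀ Q + Q M)` is positive
definite, then `M` is Hurwitz. -/
lemma blkaux_hurwitz_of_lyapunov {M Q : Matrix m m ℝ} (hQ : Q.PosDef)
    (h : (-(Mᵀ * Q + Q * M)).PosDef) : IsHurwitz M := by
  intro μ hμ
  set f := algebraMap ℝ ℂ with hf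
  rw [spectrum.mem_iff, Matrix.isUnit_iff_isUnit_det, isUnit_iff_ne_zero, ne_eq, not_not] at hμ
  obtain ⟨v, hv0, hv⟩ := (Matrix.exists_mulVec_eq_zero_iff).mpr hμ
  rw [sub_mulVec] at hv
  have h2 : (algebraMap ℂ (Matrix m m ℂ)) μ *ᵥ v = μ • v := by
    simp [Algebra.algebraMap_eq_smul_one, smul_mulVec]
  rw [h2, sub_eq_zero] at hv
  have hQc := blkaux_posDef_map_complex hQ
  have hSc := blkaux_posDef_map_complex h
  set t := star v ⬝ᵥ ((Q.map f) *ᵥ v) with ht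
  have htpos : 0 < t := hQc.dotProduct_mulVec_pos hv0
  rw [Complex.lt_def] at htpos
  obtain ⟨htre, htim⟩ := htpos
  simp only [Complex.zero_re, Complex.zero_im] at htre htim
  have hMstar : (M.map f) *ᵥ (star v) = star ((M.map f) *ᵥ v) := by
    funext i
    simp only [mulVec, dotProduct, Pi.star_apply, star_sum, star_mul']
    congr 1
    funext j
    simp [Matrix.map_apply, hf, Complex.conj_ofReal, mul_comm]
  have hs : star v ⬝ᵥ (((Mᵀ * Q + Q * M).map f) *ᵥ v) = ((2 * μ.re : ℝ) : ℂ) * t := by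
    have hmap : (Mᵀ * Q + Q * M).map f = (M.map f)ᵀ * (Q.map f) + (Q.map f) * (M.map f) := by
      simp [Matrix.map_add, Matrix.map_mul, Matrix.transpose_map]
    rw [hmap, add_mulVec, dotProduct_add, ← mulVec_mulVec, ← mulVec_mulVec]
    have e1 : star v ⬝ᵥ ((M.map f)ᵀ *ᵥ ((Q.map f) *ᵥ v)) = (starRingEnd ℂ) μ * t := by
      rw [dotProduct_mulVec, vecMul_transpose, hMstar, ← hv]
      rw [star_smul, smul_dotProduct]
      rfl
    have e2 : star v ⬝ᵥ ((Q.map f) *ᵥ ((M.map f) *ᵥ v)) = μ * t := by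
      rw [← hv, mulVec_smul, dotProduct_smul]
      rfl
    rw [e1, e2, ← add_mul]
    congr 1
    rw [add_comm, Complex.add_conj]
  have hneg := hSc.dotProduct_mulVec_pos hv0
  have hmapneg : ((-(Mᵀ * Q + Q * M)).map f) = -((Mᵀ * Q + Q * M).map f) := by
    ext i j; simp [Matrix.map_apply]
  rw [hmapneg, neg_mulVec, dotProduct_neg, hs, Complex.lt_def] at hneg
  obtain ⟨hre, _⟩ := hneg
  simp only [Complex.zero_re, Complex.neg_re, Complex.mul_re, Complex.ofReal_re,
    Complex.ofReal_im, htim] at hre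
  nlinarith

/-- The euclidean-space incarnation of a vector. -/
noncomputable def blkaux_eqs (u : m → ℝ) : EuclideanSpace ℝ m := (WithLp.equiv 2 (m → ℝ)).symm u

omit [DecidableEq m] in
lemma blkaux_inner_eqs (u v : m → ℝ) :
    inner ℝ (blkaux_eqs u) (blkaux_eqs v) = u ⬝ᵥ v := by
  simp [blkaux_eqs, PiLp.inner_apply, dotProduct, WithLp.equiv_symm_apply, PiLp.toLp_apply, mul_comm]

lemma blkaux_clm_eqs (M : Matrix m m ℝ) (u : m → ℝ) :
    (Matrix.toEuclideanCLM (𝕜 := ℝ) M) (blkaux_eqs u) = blkaux_eqs (M *ᵥ u) := by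
  rw [blkaux_eqs, blkaux_eqs, WithLp.equiv_symm_apply, toEuclideanCLM_toLp]

omit [DecidableEq m] in
lemma blkaux_norm_eqs_sq (u : m → ℝ) : ‖blkaux_eqs u‖ ^ 2 = u ⬝ᵥ u := by
  rw [← real_inner_self_eq_norm_sq, blkaux_inner_eqs]

lemma blkaux_dot_mulVec_le (M : Matrix m m ℝ) (u v : m → ℝ) :
    |u ⬝ᵥ (M *ᵥ v)| ≤ opNorm2 M * (‖blkaux_eqs u‖ * ‖blkaux_eqs v‖) := by
  rw [← blkaux_inner_eqs, ← blkaux_clm_eqs]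
  calc |inner ℝ (blkaux_eqs u) ((Matrix.toEuclideanCLM (𝕜 := ℝ) M) (blkaux_eqs v))|
      ≤ ‖blkaux_eqs u‖ * ‖(Matrix.toEuclideanCLM (𝕜 := ℝ) M) (blkaux_eqs v)‖ :=
        abs_real_inner_le_norm _ _
    _ ≤ ‖blkaux_eqs u‖ * (opNorm2 M * ‖blkaux_eqs v‖) := by
        gcongr
        exact (Matrix.toEuclideanCLM (𝕜 := ℝ) M).le_opNorm _
    _ = opNorm2 M * (‖blkaux_eqs u‖ * ‖blkaux_eqs v‖) := by ring

/-- Coercivity of the quadratic form of a positive definite matrix. -/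
lemma blkaux_coercive [Nonempty m] {S : Matrix m m ℝ} (hS : S.PosDef) :
    ∃ c > 0, ∀ u : m → ℝ, c * (u ⬝ᵥ u) ≤ u ⬝ᵥ (S *ᵥ u) := by
  set T := Matrix.toEuclideanCLM (𝕜 := ℝ) S with hT
  set g : EuclideanSpace ℝ m → ℝ := fun x => inner ℝ x (T x) with hg
  have hgc : Continuous g := continuous_id.inner T.continuous
  have hsphere : IsCompact (Metric.sphere (0 : EuclideanSpace ℝ m) 1) := isCompact_sphere _ _
  have hne : (Metric.sphere (0 : EuclideanSpace ℝ m) 1).Nonempty :=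
    NormedSpace.sphere_nonempty.mpr zero_le_one
  obtain ⟨x0, hx0mem, hx0min⟩ := hsphere.exists_isMinOn hne hgc.continuousOn
  have hgeq : ∀ u : m → ℝ, g (blkaux_eqs u) = u ⬝ᵥ (S *ᵥ u) := fun u => by
    rw [hg]; dsimp only
    rw [blkaux_clm_eqs, blkaux_inner_eqs]
  have hsurj : ∀ x : EuclideanSpace ℝ m, x = blkaux_eqs (WithLp.equiv 2 (m → ℝ) x) := fun x => by
    simp [blkaux_eqs]
  have hgpos : ∀ x : EuclideanSpace ℝ m, x ≠ 0 → 0 < g x := by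
    intro x hx
    rw [hsurj x, hgeq]
    have hux : (WithLp.equiv 2 (m → ℝ)) x ≠ 0 := by simpa using hx
    simpa using hS.dotProduct_mulVec_pos hux
  set c := g x0 with hc
  have hcpos : 0 < c := hgpos x0 (by
    intro h0
    rw [mem_sphere_iff_norm, h0] at hx0mem
    simpa using hx0mem)
  refine ⟨c, hcpos, fun u => ?_⟩
  rcases eq_or_ne u 0 with rfl | hu
  · simp
  · set x : EuclideanSpace ℝ m := blkaux_eqs u with hxdef
    have hx0 : x ≠ 0 := by
      simp only [hxdef, blkaux_eqs]
      simpa using hu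
    have hnx : 0 < ‖x‖ := norm_pos_iff.mpr hx0
    set y : EuclideanSpace ℝ m := ‖x‖⁻¹ • x with hy
    have hymem : y ∈ Metric.sphere (0 : EuclideanSpace ℝ m) 1 := by
      simp [hy, norm_smul, abs_of_pos (inv_pos.mpr hnx), inv_mul_cancel₀ hnx.ne']
    have hgy : g x = ‖x‖ ^ 2 * g y := by
      rw [hg]; dsimp only
      rw [hy, T.map_smul, real_inner_smul_left, real_inner_smul_right]
      field_simp
    have hle : c ≤ g y := hx0min hymem
    have : c * ‖x‖ ^ 2 ≤ g x := by
      rw [hgy]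
      nlinarith [sq_nonneg ‖x‖]
    rw [← hgeq u, ← blkaux_norm_eqs_sq u]
    calc c * ‖blkaux_eqs u‖ ^ 2 ≤ g x := this
      _ = g (blkaux_eqs u) := rfl

end Auxiliary

set_option maxHeartbeats 1000000 in
theorem robust_block_D_stable_of_block_diagonal_stable
    (N : ℕ) (hN : 0 < N) (n : Fin N → ℕ) (hn : ∀ i, 0 < n i)
    (A : Matrix ((i : Fin N) × Fin (n i)) ((i : Fin N) × Fin (n i)) ℝ)
    (P : Matrix ((i : Fin N) × Fin (n i)) ((i : Fin N) × Fin (n i)) ℝ)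
    (hP : P.PosDef)
    -- `P = blkdiag (P_1, …, P_N)` is block diagonal
    (hPblk : ∀ p q : (i : Fin N) × Fin (n i), p.1 ≠ q.1 → P p q = 0)
    -- `Aᵀ P + P A` is negative definite
    (hLyap : (-(Aᵀ * P + P * A)).PosDef) :
    RobustBlockDStable A := by
  have hne : Nonempty ((i : Fin N) × Fin (n i)) := ⟨⟨⟨0, hN⟩, ⟨0, hn _⟩⟩⟩
  have hPsym : Pᵀ = P := hP.1
  obtain ⟨c, hc, hcoer⟩ := blkaux_coercive hLyap
  set κ := opNorm2 P with hκdef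
  have hκ : 0 ≤ κ := norm_nonneg _
  refine ⟨c / (2 * (κ + 1)), by positivity, fun B hB => ?_⟩
  set nb := opNorm2 B with hnbdef
  have hnb : 0 ≤ nb := norm_nonneg _
  have hB' : nb * (2 * (κ + 1)) ≤ c := by
    rw [← le_div_iff₀ (by positivity)]
    exact hB
  -- the perturbed Lyapunov inequality
  have hpert : (-((A + B)ᵀ * P + P * (A + B))).PosDef := by
    rw [Matrix.posDef_iff_dotProduct_mulVec]
    constructor
    · show _ = _
      have : (-((A + B)ᵀ * P + P * (A + B)))ᵀ = -((A + B)ᵀ * P + P * (A + B)) := by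
        simp only [transpose_neg, transpose_add, transpose_mul, transpose_transpose, hPsym]
        abel
      exact this
    · intro x hx
      simp only [star_trivial]
      have hexp : -((A + B)ᵀ * P + P * (A + B))
          = (-(Aᵀ * P + P * A)) - (Bᵀ * P + P * B) := by
        simp only [transpose_add, add_mul, mul_add]
        abel
      rw [hexp, sub_mulVec, dotProduct_sub, add_mulVec, dotProduct_add]
      set r := ‖blkaux_eqs x‖ with hr
      have hrpos : 0 < r := by
        rw [hr]
        refine norm_pos_iff.mpr ?_
        simp only [blkaux_eqs]
        simpa using hx
      have hr2 : 0 < r ^ 2 := by positivity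
      have hcl : c * r ^ 2 ≤ x ⬝ᵥ ((-(Aᵀ * P + P * A)) *ᵥ x) := by
        rw [hr, blkaux_norm_eqs_sq]
        exact hcoer x
      have hBx : ‖blkaux_eqs (B *ᵥ x)‖ ≤ nb * r := by
        rw [← blkaux_clm_eqs]
        exact (Matrix.toEuclideanCLM (𝕜 := ℝ) B).le_opNorm _
      have hBx0 : 0 ≤ ‖blkaux_eqs (B *ᵥ x)‖ := norm_nonneg _
      have ht1 : x ⬝ᵥ ((Bᵀ * P) *ᵥ x) = (B *ᵥ x) ⬝ᵥ (P *ᵥ x) := by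
        rw [← mulVec_mulVec, dotProduct_mulVec, vecMul_transpose]
      have ht2 : x ⬝ᵥ ((P * B) *ᵥ x) = x ⬝ᵥ (P *ᵥ (B *ᵥ x)) := by
        rw [← mulVec_mulVec]
      have h1 := blkaux_dot_mulVec_le P (B *ᵥ x) x
      have h2 := blkaux_dot_mulVec_le P x (B *ᵥ x)
      have hE : x ⬝ᵥ ((Bᵀ * P) *ᵥ x) + x ⬝ᵥ ((P * B) *ᵥ x) ≤ 2 * κ * nb * r ^ 2 := by
        rw [ht1, ht2]
        have hh0 : ‖blkaux_eqs (B *ᵥ x)‖ * r ≤ nb * r * r :=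
          mul_le_mul_of_nonneg_right hBx hrpos.le
        have hh : κ * (‖blkaux_eqs (B *ᵥ x)‖ * r) ≤ κ * (nb * r * r) :=
          mul_le_mul_of_nonneg_left hh0 hκ
        have l1 : (B *ᵥ x) ⬝ᵥ (P *ᵥ x) ≤ κ * (nb * r * r) := by
          calc (B *ᵥ x) ⬝ᵥ (P *ᵥ x) ≤ |(B *ᵥ x) ⬝ᵥ (P *ᵥ x)| := le_abs_self _
            _ ≤ κ * (‖blkaux_eqs (B *ᵥ x)‖ * ‖blkaux_eqs x‖) := h1
            _ ≤ κ * (nb * r * r) := hh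
        have l2 : x ⬝ᵥ (P *ᵥ (B *ᵥ x)) ≤ κ * (nb * r * r) := by
          have hh : κ * (r * ‖blkaux_eqs (B *ᵥ x)‖) ≤ κ * (nb * r * r) := by
            rw [mul_comm r]
            exact hh
          calc x ⬝ᵥ (P *ᵥ (B *ᵥ x)) ≤ |x ⬝ᵥ (P *ᵥ (B *ᵥ x))| := le_abs_self _
            _ ≤ κ * (‖blkaux_eqs x‖ * ‖blkaux_eqs (B *ᵥ x)‖) := h2
            _ ≤ κ * (nb * r * r) := hh
        linarith
      have hpos : 0 < c - 2 * κ * nb := by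
        rcases eq_or_lt_of_le hnb with h | h
        · rw [← h]; simpa using hc
        · linarith
      linarith [mul_pos hpos hr2]
  -- now the D-scaling
  intro d hd
  have hcomm : ∀ g : ((i : Fin N) × Fin (n i)) → ℝ,
      (∀ p q : (i : Fin N) × Fin (n i), p.1 = q.1 → g p = g q) →
      P * Matrix.diagonal g = Matrix.diagonal g * P := by
    intro g hg
    ext p q
    rw [mul_diagonal, diagonal_mul]
    by_cases h : p.1 = q.1
    · rw [hg p q h, mul_comm]
    · rw [hPblk p q h, mul_zero, zero_mul]
  set D : Matrix ((i : Fin N) × Fin (n i)) ((i : Fin N) × Fin (n i)) ℝ := Matrix.diagonal (fun p => d p.1) with hD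
  set Dinv : Matrix ((i : Fin N) × Fin (n i)) ((i : Fin N) × Fin (n i)) ℝ := Matrix.diagonal (fun p => (d p.1)⁻¹) with hDinv
  set Dh : Matrix ((i : Fin N) × Fin (n i)) ((i : Fin N) × Fin (n i)) ℝ := Matrix.diagonal (fun p => (Real.sqrt (d p.1))⁻¹) with hDh
  have hDDinv : D * Dinv = 1 := by
    have h1 : (fun p : (i : Fin N) × Fin (n i) => d p.1 * (d p.1)⁻¹) = fun _ => (1 : ℝ) :=
      funext fun p => mul_inv_cancel₀ (hd p.1).ne'
    rw [hD, hDinv, diagonal_mul_diagonal, h1, diagonal_one]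
  have hDinvD : Dinv * D = 1 := by
    have h1 : (fun p : (i : Fin N) × Fin (n i) => (d p.1)⁻¹ * d p.1) = fun _ => (1 : ℝ) :=
      funext fun p => inv_mul_cancel₀ (hd p.1).ne'
    rw [hDinv, hD, diagonal_mul_diagonal, h1, diagonal_one]
  have hDhDh : Dh * Dh = Dinv := by
    have h1 : (fun p : (i : Fin N) × Fin (n i) => (Real.sqrt (d p.1))⁻¹ * (Real.sqrt (d p.1))⁻¹)
        = fun p : (i : Fin N) × Fin (n i) => (d p.1)⁻¹ := funext fun p => by
      rw [← mul_inv, Real.mul_self_sqrt (hd p.1).le]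
    rw [hDh, hDinv, diagonal_mul_diagonal, h1]
  set Q : Matrix ((i : Fin N) × Fin (n i)) ((i : Fin N) × Fin (n i)) ℝ := P * Dinv with hQ
  have hcD : P * D = D * P := by
    rw [hD]; exact hcomm _ (fun p q h => by rw [h])
  have hcDh : P * Dh = Dh * P := by
    rw [hDh]; exact hcomm _ (fun p q h => by rw [h])
  have hQeq : Q = Dhᵀ * P * Dh := by
    rw [hQ, hDh, diagonal_transpose, ← hDh, ← hDhDh, ← mul_assoc, hcDh]
  have hQpd : Q.PosDef := by
    rw [Matrix.posDef_iff_dotProduct_mulVec]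
    constructor
    · show _ = _
      rw [hQeq]
      have h1 : (Dhᵀ * P * Dh)ᵀ = Dhᵀ * P * Dh := by
        rw [transpose_mul, transpose_mul, transpose_transpose, hPsym, hDh, diagonal_transpose,
          mul_assoc]
      exact h1
    · intro x hx
      rw [hQeq]
      have hDhx : Dh *ᵥ x ≠ 0 := by
        intro h0
        apply hx
        funext p
        have := congrFun h0 p
        rw [hDh] at this
        simp only [mulVec_diagonal, Pi.zero_apply] at this
        have hs0 : (Real.sqrt (d p.1))⁻¹ ≠ 0 := by
          have := Real.sqrt_pos.mpr (hd p.1)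
          positivity
        have := mul_eq_zero.mp this
        simp only [Pi.zero_apply]
        tauto
      have := hP.dotProduct_mulVec_pos hDhx
      simp only [star_trivial] at this ⊢
      have heq : x ⬝ᵥ ((Dhᵀ * P * Dh) *ᵥ x) = (Dh *ᵥ x) ⬝ᵥ (P *ᵥ (Dh *ᵥ x)) := by
        rw [← mulVec_mulVec, ← mulVec_mulVec, dotProduct_mulVec, vecMul_transpose]
      rw [heq]
      exact this
  -- the Lyapunov equation for D * (A + B)
  set M : Matrix ((i : Fin N) × Fin (n i)) ((i : Fin N) × Fin (n i)) ℝ := D * (A + B) with hM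
  have hlyapM : Mᵀ * Q + Q * M = (A + B)ᵀ * P + P * (A + B) := by
    have e1 : Mᵀ * Q = (A + B)ᵀ * P := by
      rw [hM, hQ, transpose_mul, hD, diagonal_transpose, ← hD]
      calc (A + B)ᵀ * D * (P * Dinv) = (A + B)ᵀ * (D * P) * Dinv := by
            rw [mul_assoc, mul_assoc, mul_assoc]
        _ = (A + B)ᵀ * (P * D) * Dinv := by rw [hcD]
        _ = (A + B)ᵀ * P * (D * Dinv) := by rw [mul_assoc, mul_assoc, mul_assoc]
        _ = (A + B)ᵀ * P := by rw [hDDinv, mul_one]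
    have e2 : Q * M = P * (A + B) := by
      rw [hQ, hM]
      calc P * Dinv * (D * (A + B)) = P * (Dinv * D) * (A + B) := by
            rw [mul_assoc, mul_assoc, mul_assoc]
        _ = P * (A + B) := by rw [hDinvD, mul_one]
    rw [e1, e2]
  refine blkaux_hurwitz_of_lyapunov hQpd ?_
  rw [hlyapM]
  exact hpert
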